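/- Suppose y : [0,∞) → ℝ is differentiable, nonnegative, and satisfies y'(t) ≤ −2A·y(t) + B·σ(t) for all t ≥ 0, where A > 0, B ≥ 0 are constants and σ : [0,∞) → ℝ is continuous, nonnegative, with σ(t) → 0 as t → ∞. Then y(t) → 0 as t → ∞. -/

import Mathlib

open Filter

theorem stmt_17 (y σ : ℝ → ℝ) (A B : ℝ) (hA : 0 < A) (hB : 0 ≤ B)
    (hy : Differentiable ℝ y) (hynn : ∀ t ≥ (0 : ℝ), 0 ≤ y t)
    (hineq : ∀ t ≥ (0 : ℝ), deriv y t ≤ -2 * A * y t + B * σ t)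
    (hσcont : Continuous σ) (hσnn : ∀ t ≥ (0 : ℝ), 0 ≤ σ t)
    (hσ : Tendsto σ atTop (nhds 0)) :
    Tendsto y atTop (nhds 0) := by
  rw [Metric.tendsto_atTop]
  intro ε hε
  set ε' : ℝ := A * ε / (2 * (B + 1)) with hε'def
  have hε' : 0 < ε' := by positivity
  obtain ⟨T₀, hT₀⟩ := Metric.tendsto_atTop.mp hσ ε' hε'
  set T : ℝ := max T₀ 0 with hTdef
  have hT0 : (0:ℝ) ≤ T := le_max_right _ _
  set c : ℝ := B * ε' / (2 * A) with hcdef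
  have hc0 : 0 ≤ c := by positivity
  have hc : c < ε / 2 := by
    have h1 : c = B * ε / (4 * (B + 1)) := by
      rw [hcdef, hε'def]; field_simp; ring
    rw [h1, div_lt_iff₀ (by positivity)]
    nlinarith [mul_nonneg hB hε.le]
  set F : ℝ → ℝ := fun t => y T * Real.exp (2*A*T)
      + c * (Real.exp (2*A*t) - Real.exp (2*A*T)) - y t * Real.exp (2*A*t) with hFdef
  have hFd : ∀ t : ℝ, HasDerivAt F
      (c * (Real.exp (2*A*t) * (2*A))
        - (deriv y t * Real.exp (2*A*t) + y t * (Real.exp (2*A*t) * (2*A)))) t := by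
    intro t
    have h1 : HasDerivAt (fun x : ℝ => 2*A*x) (2*A) t := by
      simpa using (hasDerivAt_id t).const_mul (2*A)
    have hE := h1.exp
    have hg := (hy t).hasDerivAt.mul hE
    have := ((hasDerivAt_const t (y T * Real.exp (2*A*T))).add
      ((hE.sub_const (Real.exp (2*A*T))).const_mul c)).sub hg
    exact this.congr_deriv (by ring)
  have hFdiff : Differentiable ℝ F := fun t => (hFd t).differentiableAt
  have hmono : MonotoneOn F (Set.Ici T) := by
    apply monotoneOn_of_deriv_nonneg (convex_Ici T) hFdiff.continuous.continuousOn
      (hFdiff.differentiableOn)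
    intro t ht
    rw [interior_Ici] at ht
    have ht' : T < t := ht
    have ht0 : (0:ℝ) ≤ t := le_trans hT0 ht'.le
    have hσt : σ t ≤ ε' := by
      have := hT₀ t (le_trans (le_max_left _ _) ht'.le)
      rw [Real.dist_eq, sub_zero] at this
      exact (abs_lt.mp this).2.le
    rw [(hFd t).deriv]
    have hEp := Real.exp_pos (2*A*t)
    have h2 := hineq t ht0
    have hc2A : c * (2*A) = B * ε' := by
      rw [hcdef]; field_simp
    nlinarith [mul_nonneg hB (sub_nonneg.mpr hσt), hEp.le,
      mul_le_mul_of_nonneg_right (sub_nonneg.mpr hσt) (mul_nonneg hB hEp.le)]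
  -- tendsto of the decaying term
  have htd : Tendsto (fun t : ℝ => (y T * Real.exp (2*A*T)) * Real.exp (-(2*A*t)))
      atTop (nhds 0) := by
    have h1 : Tendsto (fun t : ℝ => 2*A*t) atTop atTop :=
      Tendsto.const_mul_atTop (by positivity) tendsto_id
    have h2 : Tendsto (fun t : ℝ => Real.exp (-(2*A*t))) atTop (nhds 0) :=
      Real.tendsto_exp_neg_atTop_nhds_zero.comp h1
    simpa using h2.const_mul (y T * Real.exp (2*A*T))
  obtain ⟨N, hN⟩ := Metric.tendsto_atTop.mp htd (ε/2 - c) (by linarith)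
  refine ⟨max N T, fun n hn => ?_⟩
  have hnT : T ≤ n := le_trans (le_max_right _ _) hn
  have hn0 : (0:ℝ) ≤ n := le_trans hT0 hnT
  have hFn : F T ≤ F n := hmono (Set.self_mem_Ici) hnT hnT
  have hFT : F T = 0 := by simp [hFdef]
  rw [hFT, hFdef] at hFn
  simp only at hFn
  have hEn := Real.exp_pos (2*A*n)
  have hET := Real.exp_pos (2*A*T)
  -- y n * exp(2An) ≤ y T * exp(2AT) + c * exp(2An)
  have key : y n * Real.exp (2*A*n) ≤ y T * Real.exp (2*A*T) + c * Real.exp (2*A*n) := by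
    nlinarith [mul_nonneg hc0 hET.le]
  have hinv : Real.exp (-(2*A*n)) = (Real.exp (2*A*n))⁻¹ := Real.exp_neg _
  have hyb : y n ≤ (y T * Real.exp (2*A*T)) * Real.exp (-(2*A*n)) + c := by
    rw [hinv]
    rw [← sub_nonneg]
    have : (y T * Real.exp (2*A*T)) * (Real.exp (2*A*n))⁻¹ + c - y n
        = (y T * Real.exp (2*A*T) + c * Real.exp (2*A*n) - y n * Real.exp (2*A*n))
          * (Real.exp (2*A*n))⁻¹ := by
      field_simp
    rw [this]
    exact mul_nonneg (by linarith) (inv_nonneg.mpr hEn.le)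
  have hdec := hN n (le_trans (le_max_left _ _) hn)
  rw [Real.dist_eq, sub_zero] at hdec
  have hdec' : (y T * Real.exp (2*A*T)) * Real.exp (-(2*A*n)) < ε/2 - c :=
    lt_of_le_of_lt (le_abs_self _) hdec
  rw [Real.dist_eq, sub_zero, abs_of_nonneg (hynn n hn0)]
  linarith
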